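/- For all N_H ≥ 1, f ≥ 1 and h ≥ 1, the counts Θ(N_H, f, h, e) over all possible numbers e of initially extractable columns partition the set of all h-tuples of N_H × f column-regular binary matrices: Σ_{e=0}^{f} Θ(N_H, f, h, e) = N_H^{h·f}. -/

import Mathlib

/-- The weight of row `i` of a binary matrix `F`: the number of nonzero entries in row `i`. -/
def rowWeight {m n : ℕ} (F : Matrix (Fin m) (Fin n) Bool) (i : Fin m) : ℕ :=
  (Finset.univ.filter (fun j => F i j = true)).card

/-- The weight of column `j` of a binary matrix `F`: the number of nonzero entries in column `j`. -/
def colWeight {m n : ℕ} (F : Matrix (Fin m) (Fin n) Bool) (j : Fin n) : ℕ :=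
  (Finset.univ.filter (fun i => F i j = true)).card

/-- A binary matrix is column-regular if every column contains exactly one nonzero entry. -/
def ColRegular {m n : ℕ} (F : Matrix (Fin m) (Fin n) Bool) : Prop :=
  ∀ j, colWeight F j = 1

/-- A stopping matrix: a column-regular binary matrix with no row of weight one. -/
def IsStopping {m n : ℕ} (F : Matrix (Fin m) (Fin n) Bool) : Prop :=
  ColRegular F ∧ ∀ i, rowWeight F i ≠ 1

instance {m n : ℕ} (F : Matrix (Fin m) (Fin n) Bool) : Decidable (ColRegular F) :=
  inferInstanceAs (Decidable (∀ j, colWeight F j = 1))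

instance {m n : ℕ} (F : Matrix (Fin m) (Fin n) Bool) : Decidable (IsStopping F) :=
  inferInstanceAs (Decidable (ColRegular F ∧ ∀ i, rowWeight F i ≠ 1))

/-- `z m n` is the number of `m × n` stopping matrices. -/
def z (m n : ℕ) : ℕ :=
  Fintype.card {F : Matrix (Fin m) (Fin n) Bool // IsStopping F}

/-- `Psi h e b` is the number of `h`-tuples `(C 1, …, C h)` of subsets of a fixed
`e`-element set with `|C i| = b i` for every `i` and whose union is the whole set. -/
def Psi (h e : ℕ) (b : Fin h → ℕ) : ℕ :=
  Fintype.card {C : Fin h → Finset (Fin e) //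
    (∀ i, (C i).card = b i) ∧ Finset.univ.biUnion C = Finset.univ}

/-- In a column-regular matrix, column `j` is pivotal if the (unique) row containing the
nonzero entry of column `j` has weight one. -/
def Pivotal {m n : ℕ} (F : Matrix (Fin m) (Fin n) Bool) (j : Fin n) : Prop :=
  ∃ i, F i j = true ∧ rowWeight F i = 1

instance {m n : ℕ} (F : Matrix (Fin m) (Fin n) Bool) (j : Fin n) : Decidable (Pivotal F j) :=
  inferInstanceAs (Decidable (∃ i, F i j = true ∧ rowWeight F i = 1))

/-- Given an `h`-tuple of matrices, column `j` is initially extractable if it is pivotal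
in at least one matrix of the tuple. -/
def Extractable {m n h : ℕ} (G : Fin h → Matrix (Fin m) (Fin n) Bool) (j : Fin n) : Prop :=
  ∃ i, Pivotal (G i) j

instance {m n h : ℕ} (G : Fin h → Matrix (Fin m) (Fin n) Bool) (j : Fin n) :
    Decidable (Extractable G j) :=
  inferInstanceAs (Decidable (∃ i, Pivotal (G i) j))

open Finset

section PivAux
variable {α β : Type*} [DecidableEq α] [DecidableEq β] [Fintype α] [Fintype β]

/-- `j` is a "singleton column" of `d`: the fiber of `d j` is `{j}`. -/
def pivF (d : α → β) (j : α) : Prop := ∀ j', d j' = d j → j' = j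

instance (d : α → β) (j : α) : Decidable (pivF d j) :=
  inferInstanceAs (Decidable (∀ j', _))

def singSet (d : α → β) : Finset α := Finset.univ.filter (fun j => pivF d j)

lemma mem_singSet {d : α → β} {j : α} : j ∈ singSet d ↔ ∀ j', d j' = d j → j' = j := by
  simp only [singSet, Finset.mem_filter, Finset.mem_univ, true_and]; rfl

lemma singSet_empty_iff {d : α → β} :
    singSet d = ∅ ↔ ∀ j, ∃ j', d j' = d j ∧ j' ≠ j := by
  simp only [Finset.eq_empty_iff_forall_notMem, mem_singSet]
  push_neg
  rfl

/-- the number of functions with no singleton fiber -/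
def zc (α β : Type*) [DecidableEq α] [Fintype α] [DecidableEq β] [Fintype β] : ℕ :=
  Fintype.card {d : α → β // singSet d = ∅}

lemma pivF_conj {α' β' : Type*} [DecidableEq α'] [Fintype α'] [Fintype β']
    (e1 : α ≃ α') (e2 : β ≃ β') (d : α → β) (j : α') :
    pivF (e2 ∘ d ∘ e1.symm) j ↔ pivF d (e1.symm j) := by
  constructor
  · intro H k hk
    have := H (e1 k) (by simpa using congrArg e2 hk)
    have := congrArg e1.symm this
    simpa using this
  · intro H k hk
    have := H (e1.symm k) (e2.injective hk)
    have := congrArg e1 this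
    simpa using this

lemma zc_congr {α' β' : Type*} [DecidableEq α'] [Fintype α'] [DecidableEq β'] [Fintype β']
    (e1 : α ≃ α') (e2 : β ≃ β') : zc α β = zc α' β' := by
  unfold zc
  apply Fintype.card_congr
  refine Equiv.subtypeEquiv (Equiv.arrowCongr e1 e2) ?_
  intro d
  have key : ∀ j : α', pivF (Equiv.arrowCongr e1 e2 d) j ↔ pivF d (e1.symm j) := by
    intro j; exact pivF_conj e1 e2 d j
  constructor
  · intro H
    rw [Finset.eq_empty_iff_forall_notMem] at H ⊢
    intro j hj
    rw [mem_singSet] at hj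
    exact H (e1.symm j) (mem_singSet.mpr ((key j).mp hj))
  · intro H
    rw [Finset.eq_empty_iff_forall_notMem] at H ⊢
    intro j hj
    rw [mem_singSet] at hj
    refine H (e1 j) (mem_singSet.mpr ((key (e1 j)).mpr ?_))
    rw [e1.symm_apply_apply]
    exact hj

end PivAux

section Bridge
open Finset
variable {m n : ℕ}

def toMat (d : Fin n → Fin m) : Matrix (Fin m) (Fin n) Bool :=
  Matrix.of fun i j => decide (d j = i)

lemma colRegular_toMat (d : Fin n → Fin m) : ColRegular (toMat d) := by
  intro j
  unfold colWeight
  have : Finset.univ.filter (fun i => (toMat d) i j = true) = {d j} := by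
    ext i; simp [toMat, eq_comm]
  rw [this, Finset.card_singleton]

lemma rowWeight_toMat (d : Fin n → Fin m) (i : Fin m) :
    rowWeight (toMat d) i = (univ.filter (fun j => d j = i)).card := by
  simp [rowWeight, toMat]

lemma pivF_iff_card (d : Fin n → Fin m) (j : Fin n) :
    pivF d j ↔ (univ.filter (fun j' => d j' = d j)).card = 1 := by
  constructor
  · intro H
    have : univ.filter (fun j' => d j' = d j) = {j} := by
      ext j'
      simp only [mem_filter, mem_univ, true_and, mem_singleton]
      exact ⟨fun hj' => H j' hj', fun hj' => by rw [hj']⟩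
    rw [this, Finset.card_singleton]
  · intro H
    obtain ⟨a, ha⟩ := Finset.card_eq_one.mp H
    have hj : j ∈ univ.filter (fun j' => d j' = d j) := by simp
    rw [ha, Finset.mem_singleton] at hj
    intro j' hj'
    have : j' ∈ univ.filter (fun j'' => d j'' = d j) := by simp [hj']
    rw [ha, Finset.mem_singleton] at this
    rw [this, hj]

lemma isStopping_toMat_iff (d : Fin n → Fin m) :
    IsStopping (toMat d) ↔ singSet d = ∅ := by
  constructor
  · intro H
    rw [Finset.eq_empty_iff_forall_notMem]
    intro j hj
    rw [mem_singSet] at hj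
    have h1 : pivF d j := hj
    rw [pivF_iff_card] at h1
    exact H.2 (d j) (by rw [rowWeight_toMat]; exact h1)
  · intro H
    refine ⟨colRegular_toMat d, fun i hi => ?_⟩
    rw [rowWeight_toMat] at hi
    obtain ⟨a, ha⟩ := Finset.card_eq_one.mp hi
    have hda : d a = i := by
      have : a ∈ univ.filter (fun j => d j = i) := by rw [ha]; exact Finset.mem_singleton_self a
      simpa using this
    have : pivF d a := by
      rw [pivF_iff_card, hda, hi]
    rw [Finset.eq_empty_iff_forall_notMem] at H
    exact H a (mem_singSet.mpr this)

lemma z_eq_zc (m n : ℕ) : z m n = zc (Fin n) (Fin m) := by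
  rw [z, zc]
  symm
  apply Fintype.card_of_bijective
    (f := fun d : {d : Fin n → Fin m // singSet d = ∅} =>
      (⟨toMat d.1, (isStopping_toMat_iff d.1).mpr d.2⟩ : {F : Matrix (Fin m) (Fin n) Bool // IsStopping F}))
  constructor
  · rintro ⟨d, hd⟩ ⟨d', hd'⟩ hdd
    simp only [Subtype.mk.injEq] at hdd ⊢
    funext j
    have := congrFun (congrFun hdd (d j)) j
    simp [toMat] at this
    exact this.symm
  · rintro ⟨F, hF⟩
    have hcol := hF.1
    have hex : ∀ j, ∃ a, univ.filter (fun i => F i j = true) = {a} :=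
      fun j => Finset.card_eq_one.mp (hcol j)
    choose d hd using hex
    have hFd : F = toMat d := by
      ext i j
      have : F i j = true ↔ i = d j := by
        constructor
        · intro hc
          have h2 : i ∈ Finset.univ.filter (fun i => F i j = true) := by simp [hc]
          rw [hd j, Finset.mem_singleton] at h2; exact h2
        · intro hi
          have h2 : i ∈ ({d j} : Finset (Fin m)) := Finset.mem_singleton.mpr hi
          rw [← hd j] at h2
          simpa using h2
      by_cases h : d j = i
      · simp [toMat, h, this.mpr h.symm]
      · have : F i j ≠ true := fun hc => h (this.mp hc).symm
        simp only [Bool.not_eq_true] at this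
        simp [toMat, h, this]
    refine ⟨⟨d, ?_⟩, ?_⟩
    · rw [← isStopping_toMat_iff, ← hFd]; exact hF
    · simp [← hFd]

lemma zc_eq_z (α β : Type*) [DecidableEq α] [Fintype α] [DecidableEq β] [Fintype β] :
    zc α β = z (Fintype.card β) (Fintype.card α) := by
  rw [z_eq_zc]
  exact zc_congr (Fintype.equivFin α) (Fintype.equivFin β)

end Bridge

section KeyLemma
open Finset
variable {α β : Type*} [DecidableEq α] [DecidableEq β] [Fintype α] [Fintype β]

lemma card_fiber_eq_z (B : Finset α) (ι : {x // x ∈ B} → β) (hι : Function.Injective ι) :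
    ((univ.filter (fun d : α → β => singSet d = B)).filter
        (fun d => (fun x : {x // x ∈ B} => d x.1) = ι)).card =
      z (Fintype.card β - B.card) (Fintype.card α - B.card) := by
  classical
  set Rι : Finset β := univ.image ι with hR
  have hcard2 : Fintype.card {y : β // y ∉ Rι} = Fintype.card β - B.card := by
    rw [Fintype.card_subtype_compl]
    congr 1
    rw [Fintype.card_coe, hR, Finset.card_image_of_injective _ hι, Finset.card_univ, Fintype.card_coe]
  have hcard1 : Fintype.card {x : α // x ∉ B} = Fintype.card α - B.card := by
    rw [Fintype.card_subtype_compl, Fintype.card_coe]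
  have hzc : (univ.filter (fun g : {x : α // x ∉ B} → {y : β // y ∉ Rι} =>
      singSet g = ∅)).card = z (Fintype.card β - B.card) (Fintype.card α - B.card) := by
    rw [← Fintype.card_subtype, ← zc, zc_eq_z, hcard1, hcard2]
  rw [← hzc]
  refine Finset.card_bij'
    (i := fun d hd => fun x : {x : α // x ∉ B} =>
      (⟨d x.1, by
        simp only [Finset.mem_filter, Finset.mem_univ, true_and] at hd
        obtain ⟨hsing, hphi⟩ := hd
        intro hmem
        rw [hR] at hmem
        obtain ⟨x', _, hx'⟩ := Finset.mem_image.mp hmem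
        have hpiv : pivF d x'.1 := by
          have : x'.1 ∈ singSet d := by rw [hsing]; exact x'.2
          exact mem_singSet.mp this
        have hdx' : d x'.1 = d x.1 := by rw [← hx', ← hphi]
        have := hpiv x.1 hdx'.symm
        exact x.2 (this ▸ x'.2)⟩ : {y : β // y ∉ Rι}))
    (j := fun g hg => fun a : α => if h : a ∈ B then ι ⟨a, h⟩ else (g ⟨a, h⟩).1)
    ?hi ?hj ?left ?right
  case hi =>
    intro d hd
    simp only [Finset.mem_filter, Finset.mem_univ, true_and] at hd ⊢
    obtain ⟨hsing, hphi⟩ := hd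
    rw [Finset.eq_empty_iff_forall_notMem]
    intro x hx
    rw [mem_singSet] at hx
    have hpiv : pivF d x.1 := by
      intro j' hj'
      by_cases hjB : j' ∈ B
      · have hp : pivF d j' := mem_singSet.mp (by rw [hsing]; exact hjB)
        have := hp x.1 hj'.symm
        exact absurd (this ▸ hjB) x.2
      · have := hx ⟨j', hjB⟩ (Subtype.ext hj')
        exact congrArg Subtype.val this
    have : x.1 ∈ singSet d := mem_singSet.mpr hpiv
    rw [hsing] at this
    exact x.2 this
  case hj =>
    intro g hg
    simp only [Finset.mem_filter, Finset.mem_univ, true_and] at hg ⊢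
    constructor
    · ext a
      rw [mem_singSet]
      constructor
      · intro hp
        by_contra haB
        rw [Finset.eq_empty_iff_forall_notMem] at hg
        have hga := hg ⟨a, haB⟩
        rw [mem_singSet] at hga
        push_neg at hga
        obtain ⟨x', hx'1, hx'2⟩ := hga
        have hval : (if h : x'.1 ∈ B then ι ⟨x'.1, h⟩ else (g ⟨x'.1, h⟩).1)
            = (if h : a ∈ B then ι ⟨a, h⟩ else (g ⟨a, h⟩).1) := by
          rw [dif_neg x'.2, dif_neg haB]
          exact congrArg Subtype.val hx'1
        have := hp x'.1 hval
        exact hx'2 (Subtype.ext this)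
      · intro haB a' ha'
        by_cases ha'B : a' ∈ B
        · rw [dif_pos ha'B, dif_pos haB] at ha'
          have := hι ha'
          exact congrArg Subtype.val this
        · exfalso
          rw [dif_neg ha'B, dif_pos haB] at ha'
          exact (g ⟨a', ha'B⟩).2 (by
            show _ ∈ Finset.image ι Finset.univ
            exact Finset.mem_image.mpr ⟨⟨a, haB⟩, Finset.mem_univ _, ha'.symm⟩)
    · funext x
      simp [x.2]
  case left =>
    intro d hd
    simp only [Finset.mem_filter, Finset.mem_univ, true_and] at hd
    funext a
    show (if h : a ∈ B then ι ⟨a, h⟩ else d a) = d a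
    by_cases h : a ∈ B
    · rw [dif_pos h, ← hd.2]
    · rw [dif_neg h]
  case right =>
    intro g hg
    funext x
    apply Subtype.ext
    show (if h : x.1 ∈ B then ι ⟨x.1, h⟩ else (g ⟨x.1, h⟩).1) = (g x).1
    rw [dif_neg x.2]

lemma card_singSet_eq (B : Finset α) :
    (univ.filter (fun d : α → β => singSet d = B)).card =
      (Fintype.card β).choose B.card * (B.card).factorial *
        z (Fintype.card β - B.card) (Fintype.card α - B.card) := by
  classical
  rw [Finset.card_eq_sum_card_fiberwise
    (f := fun d : α → β => (fun x : {x // x ∈ B} => d x.1))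
    (t := univ.filter (fun ι : {x // x ∈ B} → β => Function.Injective ι))
    (fun d hd => by
      simp only [Finset.mem_coe, Finset.mem_filter, Finset.mem_univ, true_and] at hd ⊢
      intro x y hxy
      have hp : pivF d x.1 := mem_singSet.mp (by rw [hd]; exact x.2)
      exact (Subtype.ext (hp y.1 hxy.symm)).symm)]
  rw [Finset.sum_congr rfl (fun ι hι => by
    simp only [Finset.mem_filter, Finset.mem_univ, true_and] at hι
    exact card_fiber_eq_z B ι hι)]
  rw [Finset.sum_const, smul_eq_mul]
  congr 1
  rw [← Fintype.card_subtype]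
  rw [Fintype.card_congr (Equiv.subtypeInjectiveEquivEmbedding _ _)]
  rw [Fintype.card_embedding_eq, Fintype.card_coe]
  rw [Nat.descFactorial_eq_factorial_mul_choose, mul_comm]

end KeyLemma

section PsiTransport
open Finset

lemma card_filter_forall {ι : Type*} [Fintype ι] [DecidableEq ι] {γ : ι → Type*}
    [∀ i, Fintype (γ i)] [∀ i, DecidableEq (γ i)]
    (P : ∀ i, γ i → Prop) [∀ i, DecidablePred (P i)] :
    (univ.filter (fun c : ∀ i, γ i => ∀ i, P i (c i))).card
      = ∏ i, (univ.filter (fun x => P i x)).card := by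
  rw [← Fintype.card_subtype]
  rw [Fintype.card_congr (Equiv.subtypePiEquivPi (p := P))]
  rw [Fintype.card_pi]
  exact Finset.prod_congr rfl (fun i _ => Fintype.card_subtype _)

lemma psi_transport (f h e : ℕ) (E : Finset (Fin f)) (he : E.card = e) (b : Fin h → ℕ) :
    (univ.filter (fun B : Fin h → Finset (Fin f) =>
        univ.biUnion B = E ∧ ∀ i, (B i).card = b i)).card = Psi h e b := by
  classical
  rw [Psi, Fintype.card_subtype]
  set ψ : {x // x ∈ E} ≃ Fin e := E.equivFin.trans (finCongr he) with hψ
  set emb : Fin e ↪ Fin f :=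
    ⟨fun k => (ψ.symm k).1, fun k k' hkk => ψ.symm.injective (Subtype.ext hkk)⟩ with hemb
  have hembE : ∀ k, emb k ∈ E := fun k => (ψ.symm k).2
  have huniv : Finset.univ.map emb = E := by
    ext x
    simp only [Finset.mem_map, Finset.mem_univ, true_and]
    constructor
    · rintro ⟨k, rfl⟩; exact hembE k
    · intro hx; exact ⟨ψ ⟨x, hx⟩, by show (ψ.symm (ψ ⟨x, hx⟩)).1 = x; simp⟩
  have hmapfilter : ∀ S : Finset (Fin f), S ⊆ E →
      (univ.filter (fun k => emb k ∈ S)).map emb = S := by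
    intro S hS
    ext x
    simp only [Finset.mem_map, Finset.mem_filter, Finset.mem_univ, true_and]
    constructor
    · rintro ⟨k, hk, rfl⟩; exact hk
    · intro hx
      refine ⟨ψ ⟨x, hS hx⟩, ?_, ?_⟩
      · show (ψ.symm (ψ ⟨x, hS hx⟩)).1 ∈ S; simp [hx]
      · show (ψ.symm (ψ ⟨x, hS hx⟩)).1 = x; simp
  have hbiUnion : ∀ C : Fin h → Finset (Fin e),
      univ.biUnion (fun i => (C i).map emb) = (univ.biUnion C).map emb := by
    intro C
    simp only [Finset.map_eq_image]
    exact (Finset.biUnion_image).symm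
  refine Finset.card_bij'
    (i := fun B _ => fun i => univ.filter (fun k => emb k ∈ B i))
    (j := fun C _ => fun i => (C i).map emb) ?hi ?hj ?left ?right
  case hi =>
    intro B hB
    simp only [Finset.mem_filter, Finset.mem_univ, true_and] at hB ⊢
    obtain ⟨hBu, hBc⟩ := hB
    have hBsub : ∀ i, B i ⊆ E := fun i x hx =>
      hBu ▸ Finset.mem_biUnion.mpr ⟨i, Finset.mem_univ i, hx⟩
    have hmap : ∀ i, (univ.filter (fun k => emb k ∈ B i)).map emb = B i :=
      fun i => hmapfilter (B i) (hBsub i)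
    constructor
    · intro i
      have h1 := congrArg Finset.card (hmap i)
      rw [Finset.card_map] at h1
      rw [h1, hBc i]
    · apply Finset.map_injective emb
      rw [← hbiUnion, huniv]
      simp only [hmap]
      exact hBu
  case hj =>
    intro C hC
    simp only [Finset.mem_filter, Finset.mem_univ, true_and] at hC ⊢
    obtain ⟨hCc, hCu⟩ := hC
    constructor
    · rw [hbiUnion, hCu, huniv]
    · intro i
      rw [Finset.card_map]
      exact hCc i
  case left =>
    intro B hB
    simp only [Finset.mem_filter, Finset.mem_univ, true_and] at hB
    obtain ⟨hBu, hBc⟩ := hB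
    have hBsub : ∀ i, B i ⊆ E := fun i x hx =>
      hBu ▸ Finset.mem_biUnion.mpr ⟨i, Finset.mem_univ i, hx⟩
    funext i
    exact hmapfilter (B i) (hBsub i)
  case right =>
    intro C hC
    funext i
    ext k
    simp [Finset.mem_map']

end PsiTransport

section MainCount
open Finset

lemma count_ext_eq (NH f h : ℕ) (E : Finset (Fin f)) :
    (Finset.univ.filter (fun c : Fin h → Fin f → Fin NH =>
        Finset.univ.biUnion (fun i => singSet (c i)) = E)).card
      = ∑ b ∈ Fintype.piFinset (fun _ : Fin h => Finset.range (E.card + 1)),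
          Psi h E.card b *
            ∏ i, (NH.choose (b i) * (b i).factorial * z (NH - b i) (f - b i)) := by
  classical
  rw [Finset.card_eq_sum_card_fiberwise
    (f := fun c : Fin h → Fin f → Fin NH => fun i => singSet (c i))
    (t := Finset.univ.filter (fun B : Fin h → Finset (Fin f) => Finset.univ.biUnion B = E))
    (fun c hc => by
      simp only [Finset.mem_coe, Finset.mem_filter, Finset.mem_univ, true_and] at hc ⊢
      exact hc)]
  have hinner : ∀ B ∈ Finset.univ.filter
      (fun B : Fin h → Finset (Fin f) => Finset.univ.biUnion B = E),
      ((Finset.univ.filter (fun c : Fin h → Fin f → Fin NH =>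
          Finset.univ.biUnion (fun i => singSet (c i)) = E)).filter
        (fun c => (fun i => singSet (c i)) = B)).card
      = ∏ i, (NH.choose ((B i).card) * ((B i).card).factorial
          * z (NH - (B i).card) (f - (B i).card)) := by
    intro B hB
    simp only [Finset.mem_filter, Finset.mem_univ, true_and] at hB
    have hset : (Finset.univ.filter (fun c : Fin h → Fin f → Fin NH =>
          Finset.univ.biUnion (fun i => singSet (c i)) = E)).filter
        (fun c => (fun i => singSet (c i)) = B)
        = Finset.univ.filter (fun c : Fin h → Fin f → Fin NH =>
            ∀ i, singSet (c i) = B i) := by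
      ext c
      simp only [Finset.mem_filter, Finset.mem_univ, true_and, funext_iff]
      constructor
      · rintro ⟨_, h2⟩; exact h2
      · intro h2
        refine ⟨?_, h2⟩
        have hBeq : (fun i => singSet (c i)) = B := funext h2
        rw [hBeq]
        exact hB
    rw [hset]
    have hcf := card_filter_forall
      (P := fun (i : Fin h) (d : Fin f → Fin NH) => singSet d = B i)
    rw [Finset.filter_congr_decidable] at hcf ⊢
    refine hcf.trans ?_
    refine Finset.prod_congr rfl (fun i _ => ?_)
    have := card_singSet_eq (α := Fin f) (β := Fin NH) (B i)
    rw [Fintype.card_fin, Fintype.card_fin] at this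
    exact this
  rw [Finset.sum_congr rfl hinner]
  rw [← Finset.sum_fiberwise_of_maps_to
    (g := fun B : Fin h → Finset (Fin f) => fun i => (B i).card)
    (t := Fintype.piFinset (fun _ : Fin h => Finset.range (E.card + 1)))
    (fun B hB => by
      simp only [Finset.mem_filter, Finset.mem_univ, true_and] at hB
      rw [Fintype.mem_piFinset]
      intro i
      rw [Finset.mem_range, Nat.lt_succ_iff]
      exact Finset.card_le_card (fun x hx =>
        hB ▸ Finset.mem_biUnion.mpr ⟨i, Finset.mem_univ i, hx⟩))]
  refine Finset.sum_congr rfl (fun b hb => ?_)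
  have hfib : (Finset.univ.filter
        (fun B : Fin h → Finset (Fin f) => Finset.univ.biUnion B = E)).filter
      (fun B => (fun i => (B i).card) = b)
      = Finset.univ.filter (fun B : Fin h → Finset (Fin f) =>
          Finset.univ.biUnion B = E ∧ ∀ i, (B i).card = b i) := by
    ext B
    simp only [Finset.mem_filter, Finset.mem_univ, true_and, funext_iff]
  have hconst : ∀ B ∈ (Finset.univ.filter
        (fun B : Fin h → Finset (Fin f) => Finset.univ.biUnion B = E)).filter
      (fun B => (fun i => (B i).card) = b),
      ∏ i, (NH.choose ((B i).card) * ((B i).card).factorial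
          * z (NH - (B i).card) (f - (B i).card))
      = ∏ i, (NH.choose (b i) * (b i).factorial * z (NH - b i) (f - b i)) := by
    intro B hB
    simp only [Finset.mem_filter, funext_iff] at hB
    exact Finset.prod_congr rfl (fun i _ => by rw [hB.2 i])
  rw [Finset.sum_congr rfl hconst, Finset.sum_const, smul_eq_mul, hfib,
    psi_transport f h E.card E rfl b]

end MainCount

/-- The count `Θ(N_H, f, h, e)` from Lemma 2. -/
def Theta (NH f h e : ℕ) : ℕ :=
  f.choose e * ∑ b ∈ Fintype.piFinset (fun _ : Fin h => Finset.range (e + 1)),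
    Psi h e b * ∏ i, (NH.choose (b i) * (b i).factorial * z (NH - b i) (f - b i))

/-- For `N_H ≥ 1`, `f ≥ 1` and `h ≥ 1`, the counts `Θ(N_H, f, h, e)`
over all possible numbers `e` of initially extractable columns partition the set of all
`h`-tuples of `N_H × f` column-regular binary matrices:
`Σ_{e=0}^{f} Θ(N_H, f, h, e) = N_H^{h·f}`. -/
theorem sum_theta_eq_total (NH f h : ℕ) (hNH : 1 ≤ NH) (hf : 1 ≤ f) (hh : 1 ≤ h) :
    ∑ e ∈ Finset.range (f + 1), Theta NH f h e = NH ^ (h * f) := by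
  classical
  have htotal : (Finset.univ : Finset (Fin h → Fin f → Fin NH)).card = NH ^ (h * f) := by
    rw [Finset.card_univ, Fintype.card_fun, Fintype.card_fun, Fintype.card_fin,
      Fintype.card_fin, Fintype.card_fin, ← pow_mul, mul_comm f h]
  rw [← htotal]
  rw [Finset.card_eq_sum_card_fiberwise
    (f := fun c : Fin h → Fin f → Fin NH => Finset.univ.biUnion (fun i => singSet (c i)))
    (t := (Finset.univ : Finset (Finset (Fin f))))
    (fun c _ => Finset.mem_univ _)]
  rw [← Finset.sum_fiberwise_of_maps_to
    (g := fun E : Finset (Fin f) => E.card)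
    (t := Finset.range (f + 1))
    (fun E _ => Finset.mem_range.mpr (Nat.lt_succ_of_le (by
      simpa using Finset.card_le_univ E)))]
  refine Finset.sum_congr rfl (fun e he => ?_)
  have hcount : ∀ E ∈ Finset.univ.filter (fun E : Finset (Fin f) => E.card = e),
      (Finset.univ.filter (fun c : Fin h → Fin f → Fin NH =>
        Finset.univ.biUnion (fun i => singSet (c i)) = E)).card
      = ∑ b ∈ Fintype.piFinset (fun _ : Fin h => Finset.range (e + 1)),
          Psi h e b * ∏ i, (NH.choose (b i) * (b i).factorial * z (NH - b i) (f - b i)) := by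
    intro E hE
    have hEc : E.card = e := (Finset.mem_filter.mp hE).2
    rw [count_ext_eq, hEc]
  rw [Finset.sum_congr rfl hcount, Finset.sum_const, smul_eq_mul]
  simp only [Theta]
  congr 1
  have hps : Finset.univ.filter (fun E : Finset (Fin f) => E.card = e)
      = Finset.powersetCard e (Finset.univ : Finset (Fin f)) := by
    ext E
    simp [Finset.mem_powersetCard, Finset.subset_univ]
  rw [hps, Finset.card_powersetCard, Finset.card_univ, Fintype.card_fin]
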